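/- The Arf invariant of a quadratic form q with polarity equal to the symplectic form is independent of the choice of symplectic basis. -/

import Mathlib

private def chi (a : ZMod 2) : ℤ := (-1) ^ a.val

private lemma chi_add : ∀ a b : ZMod 2, chi (a + b) = chi a * chi b := by decide

private lemma chi_inj : ∀ a b : ZMod 2, chi a = chi b → a = b := by decide

private lemma chi_sum {ι : Type*} (s : Finset ι) (f : ι → ZMod 2) :
    chi (∑ i ∈ s, f i) = ∏ i ∈ s, chi (f i) := by
  classical
  induction s using Finset.cons_induction with
  | empty => simp [chi]
  | cons a s ha ih => rw [Finset.sum_cons, Finset.prod_cons, chi_add, ih]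

private lemma cell_sum : ∀ u v : ZMod 2,
    ∑ a : ZMod 2 × ZMod 2, chi (a.1 * u + a.2 * v + a.1 * a.2) = 2 * chi (u * v) := by
  decide

section
variable {V : Type*} [AddCommGroup V] [Module (ZMod 2) V]
  (B : V →ₗ[ZMod 2] V →ₗ[ZMod 2] ZMod 2)
  (q : V → ZMod 2) (hq : ∀ x y, q (x + y) = q x + q y + B x y)

include hq

private lemma q_zero : q 0 = 0 := by
  have h := hq 0 0
  simp only [add_zero, map_zero, LinearMap.zero_apply] at h
  rw [h, CharTwo.add_self_eq_zero]

private lemma q_smul (c : ZMod 2) (x : V) : q (c • x) = c * q x := by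
  fin_cases c
  · change q ((0 : ZMod 2) • x) = 0 * q x
    simpa using q_zero B q hq
  · change q ((1 : ZMod 2) • x) = 1 * q x
    simp

private lemma q_sum {ι : Type*} [DecidableEq ι] (s : Finset ι) (u : ι → V)
    (h : ∀ i j, i ≠ j → B (u i) (u j) = 0) :
    q (∑ i ∈ s, u i) = ∑ i ∈ s, q (u i) := by
  induction s using Finset.cons_induction with
  | empty => simpa using q_zero B q hq
  | cons a s ha ih =>
    rw [Finset.sum_cons, Finset.sum_cons, hq, ih]
    have hB : B (u a) (∑ i ∈ s, u i) = 0 := by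
      rw [map_sum]
      exact Finset.sum_eq_zero fun i hi => h a i (by rintro rfl; exact ha hi)
    rw [hB, add_zero]

end

private lemma gauss {g : ℕ} {V : Type*} [AddCommGroup V] [Module (ZMod 2) V]
    (B : V →ₗ[ZMod 2] V →ₗ[ZMod 2] ZMod 2)
    (q : V → ZMod 2) (hq : ∀ x y, q (x + y) = q x + q y + B x y)
    (b : Module.Basis (Fin g ⊕ Fin g) (ZMod 2) V)
    (hef : ∀ i j, B (b (Sum.inl i)) (b (Sum.inr j)) = if i = j then 1 else 0)
    (hee : ∀ i j, B (b (Sum.inl i)) (b (Sum.inl j)) = 0)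
    (hff : ∀ i j, B (b (Sum.inr i)) (b (Sum.inr j)) = 0)
    (hfe : ∀ i j, B (b (Sum.inr i)) (b (Sum.inl j)) = if i = j then 1 else 0) :
    ∑ c : (Fin g ⊕ Fin g) → ZMod 2, chi (q (b.equivFun.symm c))
      = 2 ^ g * chi (∑ i : Fin g, q (b (Sum.inl i)) * q (b (Sum.inr i))) := by
  classical
  -- the value of q at a linear combination
  have key : ∀ c : (Fin g ⊕ Fin g) → ZMod 2,
      q (b.equivFun.symm c) = ∑ i : Fin g,
        (c (Sum.inl i) * q (b (Sum.inl i)) + c (Sum.inr i) * q (b (Sum.inr i))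
          + c (Sum.inl i) * c (Sum.inr i)) := by
    intro c
    set u : Fin g → V := fun i =>
      c (Sum.inl i) • b (Sum.inl i) + c (Sum.inr i) • b (Sum.inr i) with hu
    have h1 : b.equivFun.symm c = ∑ i : Fin g, u i := by
      rw [Module.Basis.equivFun_symm_apply, Fintype.sum_sum_type, ← Finset.sum_add_distrib]
    have horth : ∀ i j, i ≠ j → B (u i) (u j) = 0 := by
      intro i j hij
      simp only [hu, map_add, map_smul, LinearMap.add_apply, LinearMap.smul_apply,
        hee, hef, hfe, hff, if_neg hij, smul_zero, add_zero, zero_add]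
    rw [h1, q_sum B q hq Finset.univ u horth]
    refine Finset.sum_congr rfl fun i _ => ?_
    have hB : B (c (Sum.inl i) • b (Sum.inl i)) (c (Sum.inr i) • b (Sum.inr i))
        = c (Sum.inl i) * c (Sum.inr i) := by
      simp [hef, smul_eq_mul, mul_comm]
    rw [hu, hq, hB, q_smul B q hq, q_smul B q hq]
  simp only [key, chi_sum]
  -- reindex by pairs of coordinates
  let E : (Fin g → ZMod 2 × ZMod 2) ≃ ((Fin g ⊕ Fin g) → ZMod 2) :=
    (Equiv.arrowProdEquivProdArrow _ _ _).trans (Equiv.sumArrowEquivProdArrow _ _ _).symm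
  rw [← Equiv.sum_comp E]
  have hE1 : ∀ (p : Fin g → ZMod 2 × ZMod 2) (i : Fin g), E p (Sum.inl i) = (p i).1 :=
    fun p i => rfl
  have hE2 : ∀ (p : Fin g → ZMod 2 × ZMod 2) (i : Fin g), E p (Sum.inr i) = (p i).2 :=
    fun p i => rfl
  simp only [hE1, hE2]
  have swap := Finset.prod_univ_sum (fun _ : Fin g => (Finset.univ : Finset (ZMod 2 × ZMod 2)))
    (fun i a => chi (a.1 * q (b (Sum.inl i)) + a.2 * q (b (Sum.inr i)) + a.1 * a.2))
  rw [Fintype.piFinset_univ] at swap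
  rw [← swap]
  simp only [cell_sum]
  rw [Finset.prod_mul_distrib, Finset.prod_const, Finset.card_univ, Fintype.card_fin,
    ← chi_sum]

/-- The Arf invariant `∑ q(eᵢ)q(fᵢ)` of a quadratic form `q` with polarity equal
to the symplectic form on a `2g`-dimensional `F₂`-vector space does not depend on the choice of
symplectic basis `(e₁,…,e_g,f₁,…,f_g)`. -/
theorem stmt1 (g : ℕ) (V : Type*) [AddCommGroup V] [Module (ZMod 2) V]
    (B : V →ₗ[ZMod 2] V →ₗ[ZMod 2] ZMod 2)
    (b b' : Module.Basis (Fin g ⊕ Fin g) (ZMod 2) V)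
    (hef : ∀ i j, B (b (Sum.inl i)) (b (Sum.inr j)) = if i = j then 1 else 0)
    (hee : ∀ i j, B (b (Sum.inl i)) (b (Sum.inl j)) = 0)
    (hff : ∀ i j, B (b (Sum.inr i)) (b (Sum.inr j)) = 0)
    (hfe : ∀ i j, B (b (Sum.inr i)) (b (Sum.inl j)) = if i = j then 1 else 0)
    (hef' : ∀ i j, B (b' (Sum.inl i)) (b' (Sum.inr j)) = if i = j then 1 else 0)
    (hee' : ∀ i j, B (b' (Sum.inl i)) (b' (Sum.inl j)) = 0)
    (hff' : ∀ i j, B (b' (Sum.inr i)) (b' (Sum.inr j)) = 0)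
    (hfe' : ∀ i j, B (b' (Sum.inr i)) (b' (Sum.inl j)) = if i = j then 1 else 0)
    (q : V → ZMod 2) (hq : ∀ x y, q (x + y) = q x + q y + B x y) :
    ∑ i : Fin g, q (b (Sum.inl i)) * q (b (Sum.inr i)) =
      ∑ i : Fin g, q (b' (Sum.inl i)) * q (b' (Sum.inr i)) := by
  have h1 := gauss B q hq b hef hee hff hfe
  have h2 := gauss B q hq b' hef' hee' hff' hfe'
  have heq : ∑ c : (Fin g ⊕ Fin g) → ZMod 2, chi (q (b'.equivFun.symm c))
      = ∑ c : (Fin g ⊕ Fin g) → ZMod 2, chi (q (b.equivFun.symm c)) := by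
    have := Equiv.sum_comp (b'.equivFun.toEquiv.symm.trans b.equivFun.toEquiv)
      (fun c => chi (q (b.equivFun.symm c)))
    rw [← this]
    exact Finset.sum_congr rfl fun c _ => by
      simp only [Equiv.trans_apply, LinearEquiv.coe_toEquiv, LinearEquiv.coe_toEquiv_symm,
        LinearEquiv.symm_apply_apply]
      rfl
  rw [h1, h2] at heq
  exact chi_inj _ _ (mul_left_cancel₀ (pow_ne_zero g (two_ne_zero : (2:ℤ) ≠ 0)) heq).symm
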